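/- The chain ((T_k, M_k))_{k≥0} of type-k population sizes and mutant counts is Markovian, with transition probabilities P_a(T_{k+1} = n', M_{k+1} = m' | T_k = n, M_k = m) = [P_{m'}(T_0 = n') / P_m(T_0 = n)] · P_m(T_0 = n, M_1 = m'), whenever the conditioning events have positive probability. -/

import Mathlib

open scoped ENNReal
open MeasureTheory ProbabilityTheory

/-- `n`-fold convolution power of a law on `ℕ × ℕ`. -/
noncomputable def convPow (π : PMF (ℕ × ℕ)) : ℕ → PMF (ℕ × ℕ)
  | 0 => PMF.pure (0, 0)
  | n + 1 => (convPow π n).bind fun s => π.map fun t => (s.1 + t.1, s.2 + t.2)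

/-- `μ` is the joint law of `(T0, M1)` under one ancestor. -/
def branchingFixedPoint (π μ : PMF (ℕ × ℕ)) : Prop :=
  μ = π.bind fun kl => (convPow μ kl.1).map fun s => (1 + s.1, kl.2 + s.2)

/-- the chain `((T_k, M_k))_{k≥0}` is Markovian with transition probabilities
`P_a(T_{k+1} = n', M_{k+1} = m' | T_k = n, M_k = m)
  = [P_{m'}(T_0 = n') / P_m(T_0 = n)] · P_m(T_0 = n, M_1 = m')`.
Here the conditioning is on the whole history `(T_i, M_i)_{i ≤ k}` (which expresses the
Markov property), `P_m(T_0 = n, M_1 = m') = convPow μ m (n, m')` and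
`P_m(T_0 = n) = ∑_ℓ convPow μ m (n, ℓ)`. -/
noncomputable def W (μ : PMF (ℕ × ℕ)) (b : ℕ) (k : ℕ) (s : Fin (k + 1) → ℕ × ℕ) : ℝ≥0∞ :=
  (convPow μ b) (s 0) * ∏ i : Fin k, (convPow μ ((s i.castSucc).2)) (s i.succ)

lemma W_cons (μ : PMF (ℕ × ℕ)) (b k : ℕ) (x : ℕ × ℕ) (s : Fin (k + 1) → ℕ × ℕ) :
    W μ b (k + 1) (Fin.cons x s) = (convPow μ b) x * W μ x.2 k s := by
  unfold W
  rw [Fin.prod_univ_succ]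
  have h3 : ∀ i : Fin k, (i : Fin k) ∈ Finset.univ →
      (convPow μ (((Fin.cons x s : Fin (k+2) → ℕ × ℕ) i.succ.castSucc)).2)
        ((Fin.cons x s : Fin (k+2) → ℕ × ℕ) i.succ.succ)
      = (convPow μ ((s i.castSucc)).2) (s i.succ) := by
    intro i _
    rw [← Fin.succ_castSucc]
    simp [Fin.cons_succ]
  rw [Finset.prod_congr rfl h3]
  simp only [Fin.cons_zero, Fin.castSucc_zero, Fin.cons_succ]

lemma W_snoc (μ : PMF (ℕ × ℕ)) (b k : ℕ) (x : ℕ × ℕ) (s : Fin (k + 1) → ℕ × ℕ) :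
    W μ b (k + 1) (Fin.snoc s x) = W μ b k s * (convPow μ ((s (Fin.last k)).2)) x := by
  unfold W
  rw [Fin.prod_univ_castSucc]
  have h3 : ∀ i : Fin k, (i : Fin k) ∈ Finset.univ →
      (convPow μ (((Fin.snoc s x : Fin (k+2) → ℕ × ℕ) i.castSucc.castSucc)).2)
        ((Fin.snoc s x : Fin (k+2) → ℕ × ℕ) i.castSucc.succ)
      = (convPow μ ((s i.castSucc)).2) (s i.succ) := by
    intro i _
    rw [Fin.succ_castSucc]
    rw [Fin.snoc_castSucc, Fin.snoc_castSucc]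
  rw [Finset.prod_congr rfl h3]
  have h0 : (Fin.snoc s x : Fin (k + 2) → ℕ × ℕ) 0 = s 0 := by
    rw [show (0 : Fin (k+2)) = ((0 : Fin (k+1)).castSucc) from rfl, Fin.snoc_castSucc]
  have hl : (Fin.snoc s x : Fin (k + 2) → ℕ × ℕ) (Fin.last k).castSucc = s (Fin.last k) :=
    Fin.snoc_castSucc _ _ _
  have hl2 : (Fin.snoc s x : Fin (k + 2) → ℕ × ℕ) (Fin.last k).succ = x := by
    rw [Fin.succ_last, Fin.snoc_last]
  rw [h0, hl, hl2]
  ring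

lemma W_sum (μ : PMF (ℕ × ℕ)) : ∀ (k b : ℕ), ∑' s : Fin (k + 1) → ℕ × ℕ, W μ b k s = 1 := by
  intro k
  induction k with
  | zero =>
    intro b
    have he := Equiv.tsum_eq (Equiv.funUnique (Fin 1) (ℕ × ℕ)).symm (fun s => W μ b 0 s)
    rw [← he]
    have : ∀ x : ℕ × ℕ, W μ b 0 ((Equiv.funUnique (Fin 1) (ℕ × ℕ)).symm x) = (convPow μ b) x := by
      intro x; unfold W; simp
    rw [tsum_congr this]
    exact PMF.tsum_coe _
  | succ k ih =>
    intro b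
    have he := Equiv.tsum_eq (Fin.consEquiv (fun _ : Fin (k+2) => ℕ × ℕ))
      (fun s => W μ b (k + 1) s)
    rw [← he]
    have hc : ∀ p : (ℕ × ℕ) × (Fin (k + 1) → ℕ × ℕ),
        W μ b (k + 1) ((Fin.consEquiv (fun _ : Fin (k+2) => ℕ × ℕ)) p)
          = (convPow μ b) p.1 * W μ p.1.2 k p.2 := by
      intro p
      have : (Fin.consEquiv (fun _ : Fin (k+2) => ℕ × ℕ)) p = Fin.cons p.1 p.2 := rfl
      rw [this, W_cons]
    rw [tsum_congr hc,
      ENNReal.tsum_prod (f := fun x (s : Fin (k+1) → ℕ × ℕ) => (convPow μ b) x * W μ x.2 k s)]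
    calc ∑' (x : ℕ × ℕ) (s : Fin (k+1) → ℕ × ℕ), (convPow μ b) x * W μ x.2 k s
        = ∑' (x : ℕ × ℕ), (convPow μ b) x * ∑' s : Fin (k+1) → ℕ × ℕ, W μ x.2 k s := by
          exact tsum_congr fun x => ENNReal.tsum_mul_left
      _ = ∑' (x : ℕ × ℕ), (convPow μ b) x := by
          refine tsum_congr fun x => ?_; rw [ih x.2, mul_one]
      _ = 1 := PMF.tsum_coe _

def gfun (t mm : ℕ → ℕ) (k : ℕ) (ℓ : ℕ) : Fin (k + 1) → ℕ × ℕ :=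
  fun i => (t i, if (i : ℕ) = k then ℓ else mm (i + 1))


lemma gfun_inj (t mm : ℕ → ℕ) (k : ℕ) : Function.Injective (gfun t mm k) := by
  intro ℓ ℓ' h
  have := congrArg (fun s : Fin (k + 1) → ℕ × ℕ => (s (Fin.last k)).2) h
  simpa [gfun, Fin.val_last] using this

lemma W_gfun (μ : PMF (ℕ × ℕ)) (a : ℕ) (t mm : ℕ → ℕ) (hmm0 : mm 0 = a) (k ℓ : ℕ) :
    W μ a k (gfun t mm k ℓ)
      = (∏ i ∈ Finset.range k, (convPow μ (mm i)) (t i, mm (i + 1)))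
          * (convPow μ (mm k)) (t k, ℓ) := by
  cases k with
  | zero =>
    simp [W, gfun, hmm0]
  | succ k' =>
    unfold W
    have h0 : gfun t mm (k' + 1) ℓ 0 = (t 0, mm 1) := by
      simp [gfun]
    rw [h0, Fin.prod_univ_castSucc]
    have hlast :
        (convPow μ ((gfun t mm (k' + 1) ℓ ((Fin.last k').castSucc)).2))
            (gfun t mm (k' + 1) ℓ (Fin.last k').succ)
          = (convPow μ (mm (k' + 1))) (t (k' + 1), ℓ) := by
      simp [gfun, Fin.val_last, Nat.succ_ne_self, (Nat.lt_succ_self k').ne]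
    have hmid : ∀ i : Fin k', (i : Fin k') ∈ Finset.univ →
        (convPow μ ((gfun t mm (k' + 1) ℓ (i.castSucc.castSucc)).2))
            (gfun t mm (k' + 1) ℓ (i.castSucc.succ))
          = (convPow μ (mm ((i : ℕ) + 1))) (t ((i : ℕ) + 1), mm ((i : ℕ) + 2)) := by
      intro i _
      have h1 : ((i : ℕ)) ≠ k' + 1 := (i.isLt.trans (Nat.lt_succ_self k')).ne
      have h2 : ((i : ℕ) + 1) ≠ k' + 1 := by
        simpa using i.isLt.ne
      simp [gfun, h1, h2, i.isLt.ne, add_assoc]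
    rw [Finset.prod_congr rfl hmid, hlast,
      Fin.prod_univ_eq_prod_range
        (fun j => (convPow μ (mm (j + 1))) (t (j + 1), mm (j + 2))) k',
      Finset.prod_range_succ'
        (fun i => (convPow μ (mm i)) (t i, mm (i + 1))) k']
    rw [hmm0]
    ring

/-- cylinder event -/
def Fev {Ω : Type*} (T M : ℕ → Ω → ℕ) (k : ℕ) (s : Fin (k + 1) → ℕ × ℕ) : Set Ω :=
  {ω | ∀ i : Fin (k + 1), T i ω = (s i).1 ∧ M (i + 1) ω = (s i).2}

lemma mem_Fev {Ω : Type*} {T M : ℕ → Ω → ℕ} {k : ℕ} {s : Fin (k + 1) → ℕ × ℕ} {ω : Ω} :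
    ω ∈ Fev T M k s ↔ ∀ i : Fin (k + 1), T i ω = (s i).1 ∧ M (i + 1) ω = (s i).2 := Iff.rfl

lemma P_Fev {Ω : Type*} [MeasurableSpace Ω] (P : Measure Ω) (μ : PMF (ℕ × ℕ)) (a : ℕ)
    (T M : ℕ → Ω → ℕ)
    (hchain : ∀ (k : ℕ) (t m : ℕ → ℕ),
      P {ω | ∀ i ≤ k, T i ω = t i ∧ M (i + 1) ω = m i}
        = (convPow μ a) (t 0, m 0)
            * ∏ i ∈ Finset.range k, (convPow μ (m i)) (t (i + 1), m (i + 1)))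
    (k : ℕ) (s : Fin (k + 1) → ℕ × ℕ) :
    P (Fev T M k s) = W μ a k s := by
  classical
  set t : ℕ → ℕ := fun i => if h : i < k + 1 then (s ⟨i, h⟩).1 else 0 with ht
  set m : ℕ → ℕ := fun i => if h : i < k + 1 then (s ⟨i, h⟩).2 else 0 with hm
  have hts : ∀ i : Fin (k + 1), t i = (s i).1 := by
    intro i; simp only [ht, dif_pos i.isLt, Fin.eta]
  have hms : ∀ i : Fin (k + 1), m i = (s i).2 := by
    intro i; simp only [hm, dif_pos i.isLt, Fin.eta]
  have hset : {ω | ∀ i ≤ k, T i ω = t i ∧ M (i + 1) ω = m i} = Fev T M k s := by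
    ext ω
    simp only [Set.mem_setOf_eq, mem_Fev]
    constructor
    · intro h i
      obtain ⟨h1, h2⟩ := h i i.is_le
      exact ⟨h1.trans (hts i), h2.trans (hms i)⟩
    · intro h i hi
      obtain ⟨h1, h2⟩ := h ⟨i, Nat.lt_succ_of_le hi⟩
      exact ⟨h1.trans (hts ⟨i, Nat.lt_succ_of_le hi⟩).symm,
        h2.trans (hms ⟨i, Nat.lt_succ_of_le hi⟩).symm⟩
  rw [← hset, hchain k t m]
  unfold W
  congr 1
  · rw [← Fin.prod_univ_eq_prod_range (fun i => (convPow μ (m i)) (t (i + 1), m (i + 1))) k]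
    refine Finset.prod_congr rfl fun i _ => ?_
    have e1 : m (i : ℕ) = (s i.castSucc).2 := hms i.castSucc
    have e2 : ((t ((i : ℕ) + 1), m ((i : ℕ) + 1)) : ℕ × ℕ) = s i.succ :=
      Prod.ext (hts i.succ) (hms i.succ)
    rw [e1, e2]

lemma P_union {Ω : Type*} [MeasurableSpace Ω] (P : Measure Ω) [IsProbabilityMeasure P]
    (μ : PMF (ℕ × ℕ)) (a : ℕ) (T M : ℕ → Ω → ℕ) (k : ℕ)
    (hPF : ∀ s, P (Fev T M k s) = W μ a k s)
    (g : ℕ → Fin (k + 1) → ℕ × ℕ) (hg : Function.Injective g)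
    (A : Set Ω) (hA : A = ⋃ ℓ, Fev T M k (g ℓ)) :
    P A = ∑' ℓ, W μ a k (g ℓ) := by
  have hle : P A ≤ ∑' ℓ, W μ a k (g ℓ) := by
    rw [hA]
    exact (measure_iUnion_le _).trans_eq (tsum_congr fun ℓ => hPF (g ℓ))
  have hcompl : Aᶜ ⊆ ⋃ s : {s // s ∉ Set.range g}, Fev T M k s.1 := by
    intro ω hω
    have hmem : ω ∈ Fev T M k (fun i : Fin (k + 1) => (T i ω, M (i + 1) ω)) :=
      fun i => ⟨rfl, rfl⟩
    have hnr : (fun i : Fin (k + 1) => (T i ω, M (i + 1) ω)) ∉ Set.range g := by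
      rintro ⟨ℓ, hgr⟩
      exact hω (hA ▸ Set.mem_iUnion.2 ⟨ℓ, by rw [hgr]; exact hmem⟩)
    exact Set.mem_iUnion.2 ⟨⟨_, hnr⟩, hmem⟩
  have h2 : P Aᶜ ≤ ∑' s : ↥(Set.range g)ᶜ, W μ a k s.1 :=
    (measure_mono hcompl).trans
      ((measure_iUnion_le _).trans_eq (tsum_congr fun s => hPF _))
  have hsplit : (∑' s : ↥(Set.range g), W μ a k s.1)
      + (∑' s : ↥(Set.range g)ᶜ, W μ a k s.1) = 1 := by
    rw [Summable.tsum_add_tsum_compl ENNReal.summable ENNReal.summable]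
    exact W_sum μ k a
  have hrange : (∑' s : ↥(Set.range g), W μ a k s.1) = ∑' ℓ, W μ a k (g ℓ) := by
    rw [← Equiv.tsum_eq (Equiv.ofInjective g hg) (fun s : ↥(Set.range g) => W μ a k s.1)]
    rfl
  have hcne : (∑' s : ↥(Set.range g)ᶜ, W μ a k s.1) ≠ ⊤ := by
    intro hcontra
    rw [hcontra, add_top] at hsplit
    exact ENNReal.top_ne_one hsplit
  have hge : ∑' ℓ, W μ a k (g ℓ) ≤ P A := by
    rw [← hrange]
    have h1 : (1 : ℝ≥0∞) ≤ P A + P Aᶜ := by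
      rw [← measure_univ (μ := P), ← Set.union_compl_self A]
      exact measure_union_le _ _
    have heq : (∑' s : ↥(Set.range g), W μ a k s.1)
        = 1 - (∑' s : ↥(Set.range g)ᶜ, W μ a k s.1) :=
      ENNReal.eq_sub_of_add_eq hcne hsplit
    rw [heq]
    rw [tsub_le_iff_right]
    calc (1 : ℝ≥0∞) ≤ P A + P Aᶜ := h1
      _ ≤ P A + ∑' s : ↥(Set.range g)ᶜ, W μ a k s.1 := add_le_add le_rfl h2
  exact le_antisymm hle hge

lemma event_denom {Ω : Type*} (T M : ℕ → Ω → ℕ) (a : ℕ) (hM0 : ∀ ω, M 0 ω = a)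
    (t mm : ℕ → ℕ) (hmm0 : mm 0 = a) (k : ℕ) :
    {ω | ∀ i ≤ k, T i ω = t i ∧ M i ω = mm i} = ⋃ ℓ, Fev T M k (gfun t mm k ℓ) := by
  ext ω
  simp only [Set.mem_setOf_eq, Set.mem_iUnion, mem_Fev]
  constructor
  · intro h
    refine ⟨M (k + 1) ω, fun i => ?_⟩
    refine ⟨(h i i.is_le).1, ?_⟩
    show M (↑i + 1) ω = if (i : ℕ) = k then M (k + 1) ω else mm (↑i + 1)
    by_cases hik : (i : ℕ) = k
    · rw [if_pos hik, hik]
    · rw [if_neg hik]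
      exact (h (↑i + 1) (Nat.succ_le_of_lt (lt_of_le_of_ne i.is_le hik))).2
  · rintro ⟨ℓ, h⟩ i hi
    have hlt := Nat.lt_succ_of_le hi
    refine ⟨(h ⟨i, hlt⟩).1, ?_⟩
    cases i with
    | zero => rw [hM0, hmm0]
    | succ j =>
      have hj : j < k := hi
      have h2 := (h ⟨j, hj.trans (Nat.lt_succ_self k)⟩).2
      rw [h2]
      show (if j = k then ℓ else mm (j + 1)) = mm (j + 1)
      rw [if_neg hj.ne]

lemma event_num {Ω : Type*} (T M : ℕ → Ω → ℕ) (a : ℕ) (hM0 : ∀ ω, M 0 ω = a)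
    (t mm : ℕ → ℕ) (hmm0 : mm 0 = a) (k n' m' : ℕ) :
    ({ω | ∀ i ≤ k, T i ω = t i ∧ M i ω = mm i}
        ∩ {ω | T (k + 1) ω = n' ∧ M (k + 1) ω = m'})
      = ⋃ ℓ, Fev T M (k + 1) (Fin.snoc (gfun t mm k m') (n', ℓ)) := by
  ext ω
  simp only [Set.mem_inter_iff, Set.mem_setOf_eq, Set.mem_iUnion, mem_Fev]
  constructor
  · rintro ⟨h, hT, hM⟩
    refine ⟨M (k + 2) ω, fun i => ?_⟩
    by_cases hik : (i : ℕ) = k + 1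
    · have hi : i = Fin.last (k + 1) := Fin.ext (by rw [hik, Fin.val_last])
      subst hi
      rw [Fin.snoc_last]
      exact ⟨by rw [Fin.val_last]; exact hT, by rw [Fin.val_last]⟩
    · have hle : (i : ℕ) < k + 1 := lt_of_le_of_ne i.is_le hik
      have hi : i = (⟨(i : ℕ), hle⟩ : Fin (k + 1)).castSucc := Fin.ext rfl
      rw [hi, Fin.snoc_castSucc]
      refine ⟨(h (i : ℕ) (Nat.lt_succ_iff.1 hle)).1, ?_⟩
      show M (↑i + 1) ω = if (i : ℕ) = k then m' else mm (↑i + 1)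
      by_cases hik2 : (i : ℕ) = k
      · rw [if_pos hik2, hik2]; exact hM
      · rw [if_neg hik2]
        exact (h (↑i + 1)
          (Nat.succ_le_of_lt (lt_of_le_of_ne (Nat.lt_succ_iff.1 hle) hik2))).2
  · rintro ⟨ℓ, h⟩
    refine ⟨fun i hi => ?_, ?_, ?_⟩
    · have hi1 : i < k + 1 := Nat.lt_succ_of_le hi
      have hc := h ((⟨i, hi1⟩ : Fin (k + 1)).castSucc)
      rw [Fin.snoc_castSucc] at hc
      refine ⟨hc.1, ?_⟩
      cases i with
      | zero => rw [hM0, hmm0]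
      | succ j =>
        have hj : j < k := hi
        have hc2 := h ((⟨j, hj.trans (Nat.lt_succ_self k)⟩ : Fin (k + 1)).castSucc)
        rw [Fin.snoc_castSucc] at hc2
        exact hc2.2.trans (if_neg hj.ne)
    · have hc := h (Fin.last (k + 1))
      rw [Fin.snoc_last] at hc
      have := hc.1
      rwa [Fin.val_last] at this
    · have hc := h ((Fin.last k).castSucc)
      rw [Fin.snoc_castSucc] at hc
      exact hc.2.trans (if_pos rfl)

theorem stmt10 {Ω : Type*} [MeasurableSpace Ω] (P : Measure Ω) [IsProbabilityMeasure P]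
    (π μ : PMF (ℕ × ℕ))
    (hb : branchingFixedPoint π μ)
    (a : ℕ) (ha : 1 ≤ a)
    (T M : ℕ → Ω → ℕ)
    (hM0 : ∀ ω, M 0 ω = a)
    (hchain : ∀ (k : ℕ) (t m : ℕ → ℕ),
      P {ω | ∀ i ≤ k, T i ω = t i ∧ M (i + 1) ω = m i}
        = (convPow μ a) (t 0, m 0)
            * ∏ i ∈ Finset.range k, (convPow μ (m i)) (t (i + 1), m (i + 1))) :
    ∀ (k : ℕ) (t mm : ℕ → ℕ) (n' m' : ℕ), mm 0 = a →
      P {ω | ∀ i ≤ k, T i ω = t i ∧ M i ω = mm i} ≠ 0 →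
      P ({ω | ∀ i ≤ k, T i ω = t i ∧ M i ω = mm i}
            ∩ {ω | T (k + 1) ω = n' ∧ M (k + 1) ω = m'})
          / P {ω | ∀ i ≤ k, T i ω = t i ∧ M i ω = mm i}
        = ((∑' ℓ : ℕ, (convPow μ m') (n', ℓ)) / (∑' ℓ : ℕ, (convPow μ (mm k)) (t k, ℓ)))
            * (convPow μ (mm k)) (t k, m') := by
  intro k t mm n' m' hmm0 hne
  have hPFk : ∀ s, P (Fev T M k s) = W μ a k s := fun s => P_Fev P μ a T M hchain k s
  have hPFk1 : ∀ s, P (Fev T M (k + 1) s) = W μ a (k + 1) s :=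
    fun s => P_Fev P μ a T M hchain (k + 1) s
  have hPA : P {ω | ∀ i ≤ k, T i ω = t i ∧ M i ω = mm i}
      = (∏ i ∈ Finset.range k, (convPow μ (mm i)) (t i, mm (i + 1)))
          * ∑' ℓ : ℕ, (convPow μ (mm k)) (t k, ℓ) := by
    rw [P_union P μ a T M k hPFk (gfun t mm k) (gfun_inj t mm k) _
        (event_denom T M a hM0 t mm hmm0 k)]
    rw [tsum_congr (fun ℓ => W_gfun μ a t mm hmm0 k ℓ)]
    exact ENNReal.tsum_mul_left
  have hg'inj : Function.Injective
      (fun ℓ : ℕ => (Fin.snoc (gfun t mm k m') (n', ℓ) : Fin (k + 2) → ℕ × ℕ)) := by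
    intro ℓ ℓ' h
    have := congrArg (fun s : Fin (k + 2) → ℕ × ℕ => (s (Fin.last (k + 1))).2) h
    simpa [Fin.snoc_last] using this
  have hlast2 : ((gfun t mm k m') (Fin.last k)).2 = m' := by
    show (if ((Fin.last k : Fin (k + 1)) : ℕ) = k then m' else mm _) = m'
    rw [Fin.val_last, if_pos rfl]
  have hWg' : ∀ ℓ, W μ a (k + 1) (Fin.snoc (gfun t mm k m') (n', ℓ))
      = ((∏ i ∈ Finset.range k, (convPow μ (mm i)) (t i, mm (i + 1)))
          * (convPow μ (mm k)) (t k, m')) * (convPow μ m') (n', ℓ) := by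
    intro ℓ
    rw [W_snoc, W_gfun μ a t mm hmm0 k m', hlast2]
  have hPAB : P ({ω | ∀ i ≤ k, T i ω = t i ∧ M i ω = mm i}
        ∩ {ω | T (k + 1) ω = n' ∧ M (k + 1) ω = m'})
      = ((∏ i ∈ Finset.range k, (convPow μ (mm i)) (t i, mm (i + 1)))
          * (convPow μ (mm k)) (t k, m')) * ∑' ℓ : ℕ, (convPow μ m') (n', ℓ) := by
    rw [P_union P μ a T M (k + 1) hPFk1 _ hg'inj _
        (event_num T M a hM0 t mm hmm0 k n' m')]
    rw [tsum_congr hWg']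
    exact ENNReal.tsum_mul_left
  rw [hPA] at hne
  have hD0 : (∏ i ∈ Finset.range k, (convPow μ (mm i)) (t i, mm (i + 1))) ≠ 0 :=
    left_ne_zero_of_mul hne
  have hDle : (∏ i ∈ Finset.range k, (convPow μ (mm i)) (t i, mm (i + 1))) ≤ 1 :=
    Finset.prod_le_one (fun i _ => zero_le) (fun i _ => PMF.coe_le_one _ _)
  have hDtop : (∏ i ∈ Finset.range k, (convPow μ (mm i)) (t i, mm (i + 1))) ≠ ⊤ :=
    ne_top_of_le_ne_top ENNReal.one_ne_top hDle
  rw [hPAB, hPA, mul_assoc, ENNReal.mul_div_mul_left _ _ hD0 hDtop,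
    div_eq_mul_inv, div_eq_mul_inv]
  ring
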